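/- Let S ∈ V be nonzero with H₀(S,S) = 0. Then: ker K_S is 3-dimensional and totally isotropic for H₀; im K_S is 4-dimensional; ℝ·S ⊆ ker K_S ⊆ im K_S ⊆ {x ∈ V : H₀(S,x) = 0}; and im K_S = {x ∈ V : H₀(x, y) = 0 for all y ∈ ker K_S}, i.e., im K_S = (ker K_S)^⊥ with respect to H₀. -/

import Mathlib

noncomputable section

noncomputable section

/-- `V = ℝ⁷` with its standard basis. -/
abbrev V7 : Type := Fin 7 → ℝ

/-- Evaluation of the basis 3-form `eⁱ ∧ eʲ ∧ eᵏ` on `(x, y, z)`: the determinant of the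
3×3 matrix of the corresponding coordinates. -/
def tripleDet (i j k : Fin 7) (x y z : V7) : ℝ :=
  x i * (y j * z k - y k * z j) - x j * (y i * z k - y k * z i) + x k * (y i * z j - y j * z i)

/-- The split-generic 3-form `Φ₀ = −e¹∧e⁴∧e⁷ + √2·e¹∧e⁵∧e⁶ + √2·e²∧e³∧e⁷ + e²∧e⁴∧e⁵ + e³∧e⁴∧e⁶`
(indices here are 0-indexed). -/
def Phi0 (x y z : V7) : ℝ :=
  -(tripleDet 0 3 6 x y z) + Real.sqrt 2 * tripleDet 0 4 5 x y z
    + Real.sqrt 2 * tripleDet 1 2 6 x y z + tripleDet 1 3 4 x y z + tripleDet 2 3 5 x y z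

/-- The symmetric bilinear form `H₀` of signature (3,4):
`H₀(E₁,E₇) = H₀(E₂,E₅) = H₀(E₃,E₆) = 1`, `H₀(E₄,E₄) = −1` (1-indexed). -/
def H0 (x y : V7) : ℝ :=
  x 0 * y 6 + x 6 * y 0 + x 1 * y 4 + x 4 * y 1 + x 2 * y 5 + x 5 * y 2 - x 3 * y 3


/-! ### Auxiliary material -/

/-- Explicit cross product `a × b` determined by `Φ₀` and `H₀`. -/
def crP (a b : V7) : V7 := fun i =>
  if i = 0 then a 3 * b 0 - a 0 * b 3 + Real.sqrt 2 * (a 1 * b 2 - a 2 * b 1)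
  else if i = 1 then a 1 * b 3 - a 3 * b 1 + Real.sqrt 2 * (a 5 * b 0 - a 0 * b 5)
  else if i = 2 then a 2 * b 3 - a 3 * b 2 + Real.sqrt 2 * (a 0 * b 4 - a 4 * b 0)
  else if i = 3 then a 6 * b 0 - a 0 * b 6 + a 1 * b 4 - a 4 * b 1 + a 2 * b 5 - a 5 * b 2
  else if i = 4 then a 3 * b 4 - a 4 * b 3 + Real.sqrt 2 * (a 2 * b 6 - a 6 * b 2)
  else if i = 5 then a 3 * b 5 - a 5 * b 3 + Real.sqrt 2 * (a 6 * b 1 - a 1 * b 6)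
  else a 6 * b 3 - a 3 * b 6 + Real.sqrt 2 * (a 4 * b 5 - a 5 * b 4)

lemma hs2 : Real.sqrt 2 * Real.sqrt 2 = 2 := Real.mul_self_sqrt (by norm_num)

lemma H0_symm (x y : V7) : H0 x y = H0 y x := by unfold H0; ring

lemma H0_zero_left (y : V7) : H0 0 y = 0 := by
  unfold H0; simp

lemma H0_sub_left (x x' y : V7) : H0 (x - x') y = H0 x y - H0 x' y := by
  unfold H0; simp [Pi.sub_apply]; ring

lemma H0_add_left (x x' y : V7) : H0 (x + x') y = H0 x y + H0 x' y := by
  unfold H0; simp [Pi.add_apply]; ring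

lemma H0_smul_left (c : ℝ) (x y : V7) : H0 (c • x) y = c * H0 x y := by
  unfold H0; simp [Pi.smul_apply, smul_eq_mul]; ring

/-- `H₀(a × b, c) = Φ₀(a, b, c)`. -/
lemma crP_pairing (a b c : V7) : H0 (crP a b) c = Phi0 a b c := by
  simp [H0, Phi0, tripleDet, crP]
  ring

/-- Nondegeneracy of `H₀`. -/
lemma H0_nondeg (x : V7) (h : ∀ y, H0 x y = 0) : x = 0 := by
  have h0 := h (fun k => if k = (6:Fin 7) then 1 else 0)
  have h1 := h (fun k => if k = (4:Fin 7) then 1 else 0)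
  have h2 := h (fun k => if k = (5:Fin 7) then 1 else 0)
  have h3 := h (fun k => if k = (3:Fin 7) then 1 else 0)
  have h4 := h (fun k => if k = (1:Fin 7) then 1 else 0)
  have h5 := h (fun k => if k = (2:Fin 7) then 1 else 0)
  have h6 := h (fun k => if k = (0:Fin 7) then 1 else 0)
  simp [H0] at h0 h1 h2 h3 h4 h5 h6
  funext i
  fin_cases i <;> simp_all

/-- The fundamental "composition" identity for the cross product. -/
lemma crP_comp (a b c : V7) :
    crP a (crP b c) + crP b (crP a c) = H0 b c • a + H0 a c • b - (2 * H0 a b) • c := by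
  funext i
  simp only [Pi.add_apply, Pi.sub_apply, Pi.smul_apply, smul_eq_mul]
  have hs := hs2
  fin_cases i
  · simp [crP, H0]; linear_combination ((1:ℝ)*a 0*b 1*c 4 + (1:ℝ)*a 0*b 2*c 5 + (1:ℝ)*a 1*b 0*c 4 + (-1:ℝ)*a 1*b 4*c 0 + (1:ℝ)*a 2*b 0*c 5 + (-1:ℝ)*a 2*b 5*c 0 + (-1:ℝ)*a 4*b 1*c 0 + (-1:ℝ)*a 5*b 2*c 0) * hs
  · simp [crP, H0]; linear_combination ((1:ℝ)*a 0*b 1*c 6 + (-1:ℝ)*a 0*b 6*c 1 + (1:ℝ)*a 1*b 0*c 6 + (1:ℝ)*a 1*b 5*c 2 + (-1:ℝ)*a 2*b 5*c 1 + (1:ℝ)*a 5*b 1*c 2 + (-1:ℝ)*a 5*b 2*c 1 + (-1:ℝ)*a 6*b 0*c 1) * hs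
  · simp [crP, H0]; linear_combination ((1:ℝ)*a 0*b 2*c 6 + (-1:ℝ)*a 0*b 6*c 2 + (-1:ℝ)*a 1*b 4*c 2 + (1:ℝ)*a 2*b 0*c 6 + (1:ℝ)*a 2*b 4*c 1 + (-1:ℝ)*a 4*b 1*c 2 + (1:ℝ)*a 4*b 2*c 1 + (-1:ℝ)*a 6*b 0*c 2) * hs
  · simp [crP, H0]; linear_combination ((0:ℝ)) * hs
  · simp [crP, H0]; linear_combination ((-1:ℝ)*a 0*b 6*c 4 + (1:ℝ)*a 2*b 4*c 5 + (-1:ℝ)*a 2*b 5*c 4 + (1:ℝ)*a 4*b 2*c 5 + (1:ℝ)*a 4*b 6*c 0 + (-1:ℝ)*a 5*b 2*c 4 + (-1:ℝ)*a 6*b 0*c 4 + (1:ℝ)*a 6*b 4*c 0) * hs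
  · simp [crP, H0]; linear_combination ((-1:ℝ)*a 0*b 6*c 5 + (-1:ℝ)*a 1*b 4*c 5 + (1:ℝ)*a 1*b 5*c 4 + (-1:ℝ)*a 4*b 1*c 5 + (1:ℝ)*a 5*b 1*c 4 + (1:ℝ)*a 5*b 6*c 0 + (-1:ℝ)*a 6*b 0*c 5 + (1:ℝ)*a 6*b 5*c 0) * hs
  · simp [crP, H0]; linear_combination ((-1:ℝ)*a 1*b 4*c 6 + (-1:ℝ)*a 2*b 5*c 6 + (-1:ℝ)*a 4*b 1*c 6 + (1:ℝ)*a 4*b 6*c 1 + (-1:ℝ)*a 5*b 2*c 6 + (1:ℝ)*a 5*b 6*c 2 + (1:ℝ)*a 6*b 4*c 1 + (1:ℝ)*a 6*b 5*c 2) * hs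

/-- `H₀(a × x, a × y) = H₀(a,a) H₀(x,y) − H₀(a,x) H₀(a,y)`. -/
lemma crP_norm (a x y : V7) :
    H0 (crP a x) (crP a y) = H0 a a * H0 x y - H0 a x * H0 a y := by
  have hs := hs2
  simp [H0, crP]
  linear_combination ((-1:ℝ)*a 0*a 1*x 4*y 6 + (-1:ℝ)*a 0*a 1*x 6*y 4 + (-1:ℝ)*a 0*a 2*x 5*y 6 + (-1:ℝ)*a 0*a 2*x 6*y 5 + (1:ℝ)*a 0*a 6*x 1*y 4 + (1:ℝ)*a 0*a 6*x 2*y 5 + (1:ℝ)*a 0*a 6*x 4*y 1 + (1:ℝ)*a 0*a 6*x 5*y 2 + (1:ℝ)*a 1*a 4*x 0*y 6 + (1:ℝ)*a 1*a 4*x 2*y 5 + (1:ℝ)*a 1*a 4*x 5*y 2 + (1:ℝ)*a 1*a 4*x 6*y 0 + (-1:ℝ)*a 1*a 5*x 2*y 4 + (-1:ℝ)*a 1*a 5*x 4*y 2 + (-1:ℝ)*a 2*a 4*x 1*y 5 + (-1:ℝ)*a 2*a 4*x 5*y 1 + (1:ℝ)*a 2*a 5*x 0*y 6 + (1:ℝ)*a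 2*a 5*x 1*y 4 + (1:ℝ)*a 2*a 5*x 4*y 1 + (1:ℝ)*a 2*a 5*x 6*y 0 + (-1:ℝ)*a 4*a 6*x 0*y 1 + (-1:ℝ)*a 4*a 6*x 1*y 0 + (-1:ℝ)*a 5*a 6*x 0*y 2 + (-1:ℝ)*a 5*a 6*x 2*y 0) * hs

lemma crP_zero_right (a : V7) : crP a 0 = 0 := by
  funext i
  simp only [crP, Pi.zero_apply]
  split_ifs <;> simp

lemma crP_antisymm (a b : V7) : crP a b = - crP b a := by
  funext i; simp only [crP, Pi.neg_apply]
  split_ifs <;> ring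

/-- `H₀` as a bilinear form. -/
def B0 : LinearMap.BilinForm ℝ V7 :=
  LinearMap.mk₂ ℝ H0 H0_add_left H0_smul_left
    (fun x y z => by rw [H0_symm, H0_add_left, H0_symm x y, H0_symm x z])
    (fun c x y => by rw [H0_symm, H0_smul_left, H0_symm x y, smul_eq_mul])

@[simp] lemma B0_apply (x y : V7) : B0 x y = H0 x y := rfl

lemma B0_refl : B0.IsRefl := fun x y h => by
  simpa [B0_apply, H0_symm y x] using h

lemma B0_nondeg : B0.Nondegenerate :=
  ⟨fun x hx => H0_nondeg x hx, fun y hy => H0_nondeg y (fun x => by rw [H0_symm]; exact hy x)⟩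

lemma finrank_V7 : Module.finrank ℝ V7 = 7 := by
  simp [Module.finrank_pi]

/-- A totally isotropic subspace has dimension at most 3. -/
lemma isotropic_finrank_le (U : Submodule ℝ V7)
    (hU : ∀ x ∈ U, ∀ y ∈ U, H0 x y = 0) : Module.finrank ℝ U ≤ 3 := by
  have hle : U ≤ B0.orthogonal U := fun x hx n hn => by
    simpa [LinearMap.BilinForm.IsOrtho] using hU n hn x hx
  have h := Submodule.finrank_mono hle
  rw [LinearMap.BilinForm.finrank_orthogonal B0_nondeg U, finrank_V7] at h
  omega

/-- Let `S ∈ V` be nonzero and isotropic (`H₀(S,S) = 0`).  Then `ker K_S` is 3-dimensional and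
totally isotropic, `im K_S` is 4-dimensional,
`ℝ·S ⊆ ker K_S ⊆ im K_S ⊆ {x : H₀(S,x) = 0}`, and `im K_S = (ker K_S)^⊥` w.r.t. `H₀`. -/
theorem crossMap_isotropic_filtration (S : V7) (hS0 : S ≠ 0) (hSiso : H0 S S = 0)
    (K : V7 →ₗ[ℝ] V7) (hK : ∀ x y : V7, H0 (K x) y = Phi0 S x y) :
    Module.finrank ℝ (LinearMap.ker K) = 3 ∧
    (∀ x ∈ LinearMap.ker K, ∀ y ∈ LinearMap.ker K, H0 x y = 0) ∧
    Module.finrank ℝ (LinearMap.range K) = 4 ∧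
    K S = 0 ∧
    LinearMap.ker K ≤ LinearMap.range K ∧
    (∀ x ∈ LinearMap.range K, H0 S x = 0) ∧
    (∀ x : V7, x ∈ LinearMap.range K ↔ ∀ y ∈ LinearMap.ker K, H0 x y = 0) := by
  classical
  -- K agrees with the explicit cross product
  have hKeq : ∀ x, K x = crP S x := by
    intro x
    have h : ∀ y, H0 (K x - crP S x) y = 0 := fun y => by
      rw [H0_sub_left, hK, crP_pairing, sub_self]
    exact sub_eq_zero.mp (H0_nondeg _ h)
  have hKS : K S = 0 := by
    have h : ∀ y, H0 (K S) y = 0 := fun y => by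
      rw [hK]; simp only [Phi0, tripleDet]; ring
    exact H0_nondeg _ h
  have hskew : ∀ u v, H0 (K u) v = - H0 (K v) u := by
    intro u v
    rw [hK, hK]; simp only [Phi0, tripleDet]; ring
  have hCx : ∀ x y, H0 (K x) (K y) = H0 S S * H0 x y - H0 S x * H0 S y := by
    intro x y; rw [hKeq, hKeq]; exact crP_norm S x y
  -- elements of the kernel are orthogonal to S
  have hkerS : ∀ x, K x = 0 → H0 S x = 0 := by
    intro x hx
    have h := hCx x x
    rw [hx, H0_zero_left, hSiso, zero_mul, zero_sub] at h
    exact mul_self_eq_zero.mp (neg_eq_zero.mp h.symm)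
  -- the kernel is totally isotropic
  have hkeriso : ∀ x ∈ LinearMap.ker K, ∀ y ∈ LinearMap.ker K, H0 x y = 0 := by
    intro x hx y hy
    rw [LinearMap.mem_ker] at hx hy
    have hx' : crP S x = 0 := by rw [← hKeq]; exact hx
    have hy' : crP S y = 0 := by rw [← hKeq]; exact hy
    have h3 := crP_comp x y S
    have e1 : crP y S = 0 := by rw [crP_antisymm, hy', neg_zero]
    have e2 : crP x S = 0 := by rw [crP_antisymm, hx', neg_zero]
    rw [e1, e2, crP_zero_right, crP_zero_right, H0_symm y S, H0_symm x S,
      hkerS x hx, hkerS y hy, zero_smul, zero_smul, add_zero,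
      zero_sub] at h3
    have h4 : (2 * H0 x y) • S = 0 := neg_eq_zero.mp h3.symm
    rcases smul_eq_zero.mp h4 with h | h
    · linarith
    · exact absurd h hS0
  -- the kernel of the linear functional H0 S has dimension 6
  have hWrank : Module.finrank ℝ (LinearMap.ker (B0 S)) = 6 := by
    have hne : ∃ y, H0 S y ≠ 0 := by
      by_contra h
      push_neg at h
      exact hS0 (H0_nondeg S h)
    obtain ⟨y, hy⟩ := hne
    have hrange : Module.finrank ℝ (LinearMap.range (B0 S)) = 1 := by
      have hle : Module.finrank ℝ (LinearMap.range (B0 S)) ≤ 1 := by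
        simpa using (LinearMap.range (B0 S)).finrank_le
      have hne' : LinearMap.range (B0 S) ≠ ⊥ := by
        intro hbot
        have hmem := LinearMap.mem_range_self (B0 S) y
        rw [hbot, Submodule.mem_bot] at hmem
        exact hy (by simpa using hmem)
      have hpos : 0 < Module.finrank ℝ (LinearMap.range (B0 S)) := by
        rcases Nat.eq_zero_or_pos (Module.finrank ℝ (LinearMap.range (B0 S))) with h0 | h0
        · exact absurd (Submodule.finrank_eq_zero.mp h0) hne'
        · exact h0
      omega
    have h := LinearMap.finrank_range_add_finrank_ker (B0 S)
    rw [finrank_V7, hrange] at h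
    omega
  -- lower bound for the kernel dimension
  have hker_ge : 3 ≤ Module.finrank ℝ (LinearMap.ker K) := by
    set W := LinearMap.ker (B0 S) with hW
    have hmapiso : ∀ x ∈ Submodule.map K W, ∀ y ∈ Submodule.map K W, H0 x y = 0 := by
      rintro _ ⟨u, hu, rfl⟩ _ ⟨v, hv, rfl⟩
      have hu' : H0 S u = 0 := by simpa [hW] using hu
      have hv' : H0 S v = 0 := by simpa [hW] using hv
      rw [hCx, hSiso, hu', hv', zero_mul, zero_mul, sub_zero]
    have hmaple : Module.finrank ℝ (Submodule.map K W) ≤ 3 :=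
      isotropic_finrank_le _ hmapiso
    have hrn := LinearMap.finrank_range_add_finrank_ker (K.domRestrict W)
    rw [LinearMap.range_domRestrict] at hrn
    have hWfin : Module.finrank ℝ W = 6 := hWrank
    have hsub : Submodule.map W.subtype (LinearMap.ker (K.domRestrict W)) ≤ LinearMap.ker K := by
      rintro _ ⟨⟨u, hu⟩, hk, rfl⟩
      simpa [LinearMap.mem_ker, LinearMap.domRestrict_apply] using hk
    have h1 : Module.finrank ℝ (Submodule.map W.subtype (LinearMap.ker (K.domRestrict W)))
        = Module.finrank ℝ (LinearMap.ker (K.domRestrict W)) :=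
      Submodule.finrank_map_subtype_eq W _
    have h2 := Submodule.finrank_mono hsub
    rw [hWfin] at hrn
    linarith
  have hker3 : Module.finrank ℝ (LinearMap.ker K) = 3 :=
    le_antisymm (isotropic_finrank_le _ hkeriso) hker_ge
  have hrange4 : Module.finrank ℝ (LinearMap.range K) = 4 := by
    have h := LinearMap.finrank_range_add_finrank_ker K
    rw [finrank_V7, hker3] at h
    omega
  -- range K is the H0-orthogonal complement of ker K
  have hrle : LinearMap.range K ≤ B0.orthogonal (LinearMap.ker K) := by
    rintro _ ⟨x, rfl⟩ n hn
    have hn' : K n = 0 := hn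
    show B0 n (K x) = 0
    rw [B0_apply, H0_symm, hskew, hn', H0_zero_left, neg_zero]
  have hoeq : LinearMap.range K = B0.orthogonal (LinearMap.ker K) := by
    apply Submodule.eq_of_le_of_finrank_le hrle
    rw [LinearMap.BilinForm.finrank_orthogonal B0_nondeg, finrank_V7, hker3, hrange4]
  refine ⟨hker3, hkeriso, hrange4, hKS, ?_, ?_, ?_⟩
  · intro x hx
    rw [hoeq]
    intro n hn
    show B0 n x = 0
    rw [B0_apply]
    exact hkeriso n hn x hx
  · rintro _ ⟨y, rfl⟩
    rw [H0_symm, hskew, hKS, H0_zero_left, neg_zero]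
  · intro x
    rw [hoeq, LinearMap.BilinForm.mem_orthogonal_iff]
    constructor
    · intro h y hy
      have := h y hy
      rw [H0_symm]
      exact this
    · intro h y hy
      show B0 y x = 0
      rw [B0_apply, H0_symm]
      exact h y hy

end
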